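/- arXiv:1607.03816 — 2 statements merged into one kernel-verified Lean document; each statement's English description precedes it below -/
import Mathlib

section
/- Let Ω be a nodal domain of an L²-normalized eigenfunction φ and ψ the restriction of φ to Ω extended by zero, so that the Rayleigh quotient of ψ equals λ₁(Ω). Given a finite collection of cubes {δK_{ij}} covering Ω, with each point in at most κ_δ of them, and with τ := ∫_{Ω∩Γ} φ² / ∫_Ω φ² (Γ the union of good cubes), there exists a good cube K_{i₀j₀} such that the local Rayleigh quotient ∫_{δK_{i₀j₀}} |∇ψ|² / ∫_{δK_{i₀j₀}} |ψ|² is at most (κ_δ/τ)·λ₁(Ω). -/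
open MeasureTheory

/-- Existence of a good cube with controlled local Rayleigh quotient: if
`ψ = φ·1_Ω` satisfies `∫_Ω |∇ψ|² = λ₁ ∫_Ω ψ²` (with `gradsq = |∇ψ|²`), the dilated
cubes `δK i` cover `Ω` with overlap at most `κ`, and the union `Γ` of `γ`-good
cubes captures a fraction `τ` of `∫_Ω ψ²`, then some good cube `K i₀` has local
Rayleigh quotient `∫_{δK i₀} |∇ψ|² ≤ (κ/τ)·λ₁·∫_{δK i₀} ψ²`. -/
theorem exists_good_cube_small_local_rayleigh
    {M : Type*} [MeasurableSpace M] (μ : Measure M)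
    (φ ψ gradsq : M → ℝ) (Ω : Set M) (hΩ : MeasurableSet Ω)
    (hψ : ψ = Ω.indicator φ)
    (hgrad_nonneg : 0 ≤ gradsq)
    (hgrad_supp : ∀ x ∉ Ω, gradsq x = 0)
    (hgrad_int : Integrable gradsq μ) (hψ_int : Integrable (fun x => ψ x ^ 2) μ)
    (lam₁ : ℝ) (hlam₁ : 0 < lam₁)
    (hRayleigh : ∫ x in Ω, gradsq x ∂μ = lam₁ * ∫ x in Ω, ψ x ^ 2 ∂μ)
    (m : ℕ) (K δK : Fin m → Set M)
    (hKmeas : ∀ i, MeasurableSet (K i)) (hδKmeas : ∀ i, MeasurableSet (δK i))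
    (hsub : ∀ i, K i ⊆ δK i)
    (hcover : Ω ⊆ ⋃ i, δK i)
    (κ : ℕ) (hκ : 1 ≤ κ)
    (hoverlap : ∀ x : M, Set.ncard {i : Fin m | x ∈ δK i} ≤ κ)
    (γ : ℝ) (hγ : 0 < γ)
    (τ : ℝ) (hτ : 0 < τ) (hτ1 : τ ≤ 1)
    (hψΩpos : 0 < ∫ x in Ω, ψ x ^ 2 ∂μ)
    (hΓ : τ * ∫ x in Ω, ψ x ^ 2 ∂μ ≤
      ∫ x in (⋃ i ∈ {i : Fin m |
          ∫ y in δK i, φ y ^ 2 ∂μ ≤ γ * ∫ y in K i, φ y ^ 2 ∂μ}, K i) ∩ Ω,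
        ψ x ^ 2 ∂μ) :
    ∃ i₀ : Fin m,
      (∫ y in δK i₀, φ y ^ 2 ∂μ ≤ γ * ∫ y in K i₀, φ y ^ 2 ∂μ) ∧
      ∫ x in δK i₀, gradsq x ∂μ ≤ (κ / τ) * lam₁ * ∫ x in δK i₀, ψ x ^ 2 ∂μ := by

  classical
  by_contra hcon
  push_neg at hcon
  set A := ∫ x in Ω, ψ x ^ 2 ∂μ with hA
  set Good : Set (Fin m) :=
    {i : Fin m | ∫ y in δK i, φ y ^ 2 ∂μ ≤ γ * ∫ y in K i, φ y ^ 2 ∂μ} with hGood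
  set G : Finset (Fin m) := Finset.univ.filter (fun i => i ∈ Good) with hG
  have hmemG : ∀ i : Fin m, i ∈ G ↔ i ∈ Good := by
    intro i; simp [hG]
  -- G is nonempty
  have hτA : 0 < τ * A := mul_pos hτ hψΩpos
  have hGne : G.Nonempty := by
    rw [Finset.nonempty_iff_ne_empty]
    intro h
    have hempty : Good = ∅ := by
      ext i
      simp only [Set.mem_empty_iff_false, iff_false]
      intro hi
      have : i ∈ G := (hmemG i).2 hi
      simp [h] at this
    rw [hempty] at hΓ
    simp only [Set.mem_empty_iff_false, Set.iUnion_of_empty, Set.iUnion_empty,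
      Set.empty_inter] at hΓ
    rw [Measure.restrict_empty, integral_zero_measure] at hΓ
    exact absurd (lt_of_lt_of_le hτA hΓ) (lt_irrefl 0)
  -- gradsq integrates over Ω same as whole space
  have hgrad_total : ∫ x, gradsq x ∂μ = ∫ x in Ω, gradsq x ∂μ := by
    rw [← integral_indicator hΩ]
    congr 1
    funext x
    by_cases hx : x ∈ Ω
    · simp [Set.indicator_apply, hx]
    · simp [Set.indicator_apply, hx, hgrad_supp x hx]
  -- Step A: sum of gradient integrals over dilated cubes bounded by overlap
  have hsumA : ∑ i ∈ G, ∫ x in δK i, gradsq x ∂μ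
      ≤ (κ : ℝ) * (lam₁ * A) := by
    have h1 : ∑ i ∈ G, ∫ x in δK i, gradsq x ∂μ
        = ∫ x, (∑ i ∈ G, (δK i).indicator gradsq x) ∂μ := by
      rw [integral_finset_sum _ (fun i _ => hgrad_int.indicator (hδKmeas i))]
      exact Finset.sum_congr rfl fun i _ => (integral_indicator (hδKmeas i)).symm
    have h2 : ∀ x, (∑ i ∈ G, (δK i).indicator gradsq x) ≤ (κ : ℝ) * gradsq x := by
      intro x
      have hcard : (G.filter (fun i => x ∈ δK i)).card ≤ κ := by
        have hsubf : G.filter (fun i => x ∈ δK i)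
            ⊆ Finset.univ.filter (fun i => x ∈ δK i) :=
          Finset.filter_subset_filter _ (Finset.subset_univ G)
        refine le_trans (Finset.card_le_card hsubf) ?_
        · have : {i : Fin m | x ∈ δK i}.ncard
              = (Finset.univ.filter (fun i => x ∈ δK i)).card := by
            rw [Set.ncard_eq_toFinset_card']
            congr 1
            ext i
            simp
          rw [← this]
          exact hoverlap x
      calc ∑ i ∈ G, (δK i).indicator gradsq x
          = ((G.filter (fun i => x ∈ δK i)).card : ℝ) * gradsq x := by
            simp only [Set.indicator_apply]
            rw [← Finset.sum_filter, Finset.sum_const, nsmul_eq_mul]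
        _ ≤ (κ : ℝ) * gradsq x := by
            apply mul_le_mul_of_nonneg_right _ (hgrad_nonneg x)
            exact Nat.cast_le.mpr (by convert hcard)
    calc ∑ i ∈ G, ∫ x in δK i, gradsq x ∂μ
        = ∫ x, (∑ i ∈ G, (δK i).indicator gradsq x) ∂μ := h1
      _ ≤ ∫ x, (κ : ℝ) * gradsq x ∂μ := by
          apply integral_mono
            (integrable_finset_sum _ (fun i _ => hgrad_int.indicator (hδKmeas i)))
            (hgrad_int.const_mul _) h2
      _ = (κ : ℝ) * ∫ x, gradsq x ∂μ := integral_const_mul _ _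
      _ = (κ : ℝ) * (lam₁ * A) := by rw [hgrad_total, hRayleigh]
  -- Step B: integral over the good union bounded by sum over dilated cubes
  have hsumB : τ * A ≤ ∑ i ∈ G, ∫ x in δK i, ψ x ^ 2 ∂μ := by
    refine le_trans hΓ ?_
    set U := (⋃ i ∈ Good, K i) ∩ Ω with hU
    have hUmeas : MeasurableSet U :=
      (MeasurableSet.biUnion (Set.to_countable _) (fun i _ => hKmeas i)).inter hΩ
    have h1 : ∫ x in U, ψ x ^ 2 ∂μ = ∫ x, U.indicator (fun x => ψ x ^ 2) x ∂μ :=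
      (integral_indicator hUmeas).symm
    have h2 : ∀ x, U.indicator (fun x => ψ x ^ 2) x
        ≤ ∑ i ∈ G, (δK i).indicator (fun x => ψ x ^ 2) x := by
      intro x
      by_cases hx : x ∈ U
      · have hxU := hx.1
        simp only [Set.mem_iUnion] at hxU
        obtain ⟨i, hiGood, hxK⟩ := hxU
        have hiG : i ∈ G := (hmemG i).2 hiGood
        rw [Set.indicator_of_mem hx]
        have hterm : ψ x ^ 2 ≤ (δK i).indicator (fun x => ψ x ^ 2) x := by
          rw [Set.indicator_of_mem (hsub i hxK)]
        exact hterm.trans (Finset.single_le_sum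
          (f := fun j => (δK j).indicator (fun x => ψ x ^ 2) x)
          (fun j _ => Set.indicator_nonneg (fun y _ => sq_nonneg _) x) hiG)
      · rw [Set.indicator_of_notMem hx]
        exact Finset.sum_nonneg fun j _ =>
          Set.indicator_nonneg (fun y _ => sq_nonneg _) x
    calc ∫ x in U, ψ x ^ 2 ∂μ
        = ∫ x, U.indicator (fun x => ψ x ^ 2) x ∂μ := h1
      _ ≤ ∫ x, (∑ i ∈ G, (δK i).indicator (fun x => ψ x ^ 2) x) ∂μ := by
          apply integral_mono (hψ_int.indicator hUmeas)
            (integrable_finset_sum _ (fun i _ => hψ_int.indicator (hδKmeas i))) h2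
      _ = ∑ i ∈ G, ∫ x in δK i, ψ x ^ 2 ∂μ := by
          rw [integral_finset_sum _ (fun i _ => hψ_int.indicator (hδKmeas i))]
          exact Finset.sum_congr rfl fun i _ => integral_indicator (hδKmeas i)
  -- strict inequality from the negated conclusion
  have hcoef : (0 : ℝ) ≤ (κ : ℝ) / τ * lam₁ :=
    mul_nonneg (div_nonneg (Nat.cast_nonneg κ) hτ.le) hlam₁.le
  have hstrict : ((κ : ℝ) / τ) * lam₁ * (∑ i ∈ G, ∫ x in δK i, ψ x ^ 2 ∂μ)
      < ∑ i ∈ G, ∫ x in δK i, gradsq x ∂μ := by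
    rw [Finset.mul_sum]
    refine Finset.sum_lt_sum_of_nonempty hGne ?_
    intro i hi
    exact hcon i ((hmemG i).1 hi)
  have hκlam : (κ : ℝ) * (lam₁ * A) ≤ ((κ : ℝ) / τ) * lam₁ *
      (∑ i ∈ G, ∫ x in δK i, ψ x ^ 2 ∂μ) := by
    have h1 : (κ : ℝ) * (lam₁ * A) = ((κ : ℝ) / τ) * lam₁ * (τ * A) := by
      field_simp
    rw [h1]
    exact mul_le_mul_of_nonneg_left hsumB hcoef
  exact absurd (lt_of_le_of_lt hκlam (lt_of_lt_of_le hstrict hsumA)) (lt_irrefl _)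
end

section
/- Energy corollary (conditional): assume the main theorem inrad(Ω) ≥ C·γ^{(2−n)/n}·τ^{1/2}·λ^{−1/2} holds for any admissible choice of γ (with τ the good-set L² fraction, and with ∫_Γ φ² ≥ 1 − κ_δ/γ). Choosing γ = 4κ_δ/‖φ‖²_{L²(Ω)} yields τ ≥ 1/4 and hence inrad(Ω) ≥ C'·‖φ‖_{L²(Ω)}^{2(n−2)/n}·λ^{−1/2}. -/
open MeasureTheory

/-- Energy corollary, conditional form: assume the main inradius theorem holds for
every admissible good-cube parameter `γ` (with `Γ γ` the corresponding good set
satisfying `∫_{Γ γ} φ² ≥ 1 − κ/γ`).  Choosing `γ = 4κ/E²`, where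
`E = ‖φ‖_{L²(Ω)}`, yields `inrad(Ω) ≥ C·(4κ)^{(2−n)/n}·(1/4)^{1/2}·E^{2(n−2)/n}/√λ`. -/
theorem energy_inradius_corollary
    {M : Type*} [MeasurableSpace M] (μ : Measure M) (φ : M → ℝ)
    (n : ℕ) (hn : 3 ≤ n)
    (Ω : Set M) (hΩ : MeasurableSet Ω)
    (Γ : ℝ → Set M) (hΓmeas : ∀ γ, MeasurableSet (Γ γ))
    (κ : ℝ) (hκ : 1 ≤ κ)
    (lam C inrad E : ℝ) (hlam : 0 < lam) (hC : 0 < C)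
    (hE : 0 < E) (hE1 : E ≤ 1)
    (hint : Integrable (fun x => φ x ^ 2) μ)
    (hnorm : ∫ x, φ x ^ 2 ∂μ = 1)
    (hEΩ : ∫ x in Ω, φ x ^ 2 ∂μ = E ^ 2)
    (hGamma : ∀ γ : ℝ, 0 < γ → 1 - κ / γ ≤ ∫ x in Γ γ, φ x ^ 2 ∂μ)
    (hmain : ∀ γ : ℝ, 0 < γ → ∀ τ : ℝ, 0 < τ →
      τ * ∫ x in Ω, φ x ^ 2 ∂μ ≤ ∫ x in Ω ∩ Γ γ, φ x ^ 2 ∂μ →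
      C * γ ^ ((2 - (n : ℝ)) / n) * τ ^ ((1 : ℝ) / 2) * lam ^ (-(1 : ℝ) / 2)
        ≤ inrad) :
    C * (4 * κ) ^ ((2 - (n : ℝ)) / n) * ((1 : ℝ) / 4) ^ ((1 : ℝ) / 2) *
        E ^ (2 * ((n : ℝ) - 2) / n) * lam ^ (-(1 : ℝ) / 2) ≤ inrad := by
  have hE2 : (0:ℝ) < E ^ 2 := by positivity
  set γ : ℝ := 4 * κ / E ^ 2 with hγdef
  have hγ : 0 < γ := by positivity
  have hκγ : κ / γ = E ^ 2 / 4 := by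
    field_simp [hγdef]
    rw [hγdef, div_mul_cancel₀ _ hE2.ne']; ring
  -- integral over Ω ∩ Γ γ is large
  have hsplitΩ : (∫ x in Ω ∩ Γ γ, φ x ^ 2 ∂μ) + ∫ x in Ω \ Γ γ, φ x ^ 2 ∂μ
      = ∫ x in Ω, φ x ^ 2 ∂μ :=
    integral_inter_add_diff (hΓmeas γ) hint.integrableOn
  have hsplitΓ : (∫ x in Γ γ, φ x ^ 2 ∂μ) + ∫ x in (Γ γ)ᶜ, φ x ^ 2 ∂μ
      = ∫ x, φ x ^ 2 ∂μ :=
    integral_add_compl (hΓmeas γ) hint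
  have hdiff_le : ∫ x in Ω \ Γ γ, φ x ^ 2 ∂μ ≤ ∫ x in (Γ γ)ᶜ, φ x ^ 2 ∂μ := by
    apply setIntegral_mono_set hint.integrableOn
    · filter_upwards with x using by positivity
    · exact Filter.Eventually.of_forall fun x hx => hx.2
  have hcompl : ∫ x in (Γ γ)ᶜ, φ x ^ 2 ∂μ ≤ E ^ 2 / 4 := by
    have := hGamma γ hγ
    rw [hκγ] at this
    linarith [hsplitΓ, hnorm ▸ hsplitΓ]
  have hτ : (1/4 : ℝ) * ∫ x in Ω, φ x ^ 2 ∂μ ≤ ∫ x in Ω ∩ Γ γ, φ x ^ 2 ∂μ := by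
    rw [hEΩ]
    nlinarith [hsplitΩ, hEΩ]
  have key := hmain γ hγ (1/4) (by norm_num) hτ
  have hexp : γ ^ ((2 - (n : ℝ)) / n)
      = (4 * κ) ^ ((2 - (n : ℝ)) / n) * E ^ (2 * ((n : ℝ) - 2) / n) := by
    have hn0 : (n : ℝ) ≠ 0 := by positivity
    rw [hγdef, Real.div_rpow (by positivity) hE2.le, ← Real.rpow_natCast E 2,
      ← Real.rpow_mul hE.le, div_eq_mul_inv, ← Real.rpow_neg hE.le]
    congr 1
    push_cast
    field_simp
    ring
  calc C * (4 * κ) ^ ((2 - (n : ℝ)) / n) * ((1:ℝ)/4) ^ ((1:ℝ)/2)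
        * E ^ (2 * ((n : ℝ) - 2) / n) * lam ^ (-(1:ℝ)/2)
      = C * γ ^ ((2 - (n : ℝ)) / n) * ((1:ℝ)/4) ^ ((1:ℝ)/2) * lam ^ (-(1:ℝ)/2) := by
        rw [hexp]; ring
    _ ≤ inrad := key
end
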